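/- Let (E,ℰ) be a measurable space and let (P_μ)_{μ∈𝒫(E)} be a nonlinear Markov chain satisfying conditions (C1), (C2) and (C3). Then for any two initial distributions μ₀, ν₀ ∈ 𝒫(E), the marginal distributions μ_n and ν_n satisfy ‖μ_n − ν_n‖_TV ≤ ‖μ₀ − ν₀‖_TV · (1 − α₂ + λ₂)^{⌊n/2⌋} · c_n for all n ∈ ℤ₊, where c_n = 1 + λ₁ if n is odd and c_n = 1 if n is even. -/

import Mathlib

open MeasureTheory ProbabilityTheory

/-- Total variation distance `‖μ − ν‖_TV = 2 sup_{A ∈ ℰ} |μ(A) − ν(A)|`. -/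
noncomputable def tvDist {E : Type*} [MeasurableSpace E] (μ ν : Measure E) : ℝ :=
  2 * ⨆ A : {s : Set E // MeasurableSet s}, |(μ A).toReal - (ν A).toReal|

/-- One step of the nonlinear chain: `μ ↦ μ P_μ`, `(νP_μ)(B) = ∫ P_μ(x,B) ν(dx)`. -/
noncomputable def stepMeasure {E : Type*} [MeasurableSpace E]
    (P : Measure E → Kernel E E) (μ : Measure E) : Measure E :=
  μ.bind (fun x => P μ x)

/-- Two-step transition kernel `Q_μ(x,B) = ∫ P_μ(x,dy) P_{μP_μ}(y,B)`. -/
noncomputable def twoStepKernel {E : Type*} [MeasurableSpace E]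
    (P : Measure E → Kernel E E) (μ : Measure E) (x : E) : Measure E :=
  (P μ x).bind (fun y => P (stepMeasure P μ) y)

/-- Marginal distributions `μ_{n+1} = μ_n P_{μ_n}` of the nonlinear Markov chain. -/
noncomputable def marginal {E : Type*} [MeasurableSpace E]
    (P : Measure E → Kernel E E) (μ0 : Measure E) : ℕ → Measure E
  | 0 => μ0
  | n + 1 => stepMeasure P (marginal P μ0 n)

section aux
variable {E : Type*} [MeasurableSpace E]

lemma tv_term_le_one (μ ν : Measure E) [IsProbabilityMeasure μ] [IsProbabilityMeasure ν]
    (A : Set E) : |(μ A).toReal - (ν A).toReal| ≤ 1 := by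
  have h1 : (μ A).toReal ≤ 1 := by
    have := prob_le_one (μ := μ) (s := A)
    simpa using ENNReal.toReal_mono (by norm_num) this
  have h2 : (ν A).toReal ≤ 1 := by
    have := prob_le_one (μ := ν) (s := A)
    simpa using ENNReal.toReal_mono (by norm_num) this
  have h3 : 0 ≤ (μ A).toReal := ENNReal.toReal_nonneg
  have h4 : 0 ≤ (ν A).toReal := ENNReal.toReal_nonneg
  rw [abs_sub_le_iff]; constructor <;> linarith

lemma tv_bdd (μ ν : Measure E) [IsProbabilityMeasure μ] [IsProbabilityMeasure ν] :
    BddAbove (Set.range fun A : {s : Set E // MeasurableSet s} =>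
      |(μ A).toReal - (ν A).toReal|) := by
  refine ⟨1, ?_⟩
  rintro x ⟨A, rfl⟩
  exact tv_term_le_one μ ν A

lemma le_tvDist_half (μ ν : Measure E) [IsProbabilityMeasure μ] [IsProbabilityMeasure ν]
    {A : Set E} (hA : MeasurableSet A) :
    |(μ A).toReal - (ν A).toReal| ≤ tvDist μ ν / 2 := by
  have := le_ciSup (tv_bdd μ ν) (⟨A, hA⟩ : {s : Set E // MeasurableSet s})
  rw [tvDist]; linarith

lemma tvDist_nonneg (μ ν : Measure E) [IsProbabilityMeasure μ] [IsProbabilityMeasure ν] :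
    0 ≤ tvDist μ ν := by
  have := le_tvDist_half μ ν MeasurableSet.empty
  have h := abs_nonneg ((μ ∅).toReal - (ν ∅).toReal)
  linarith

lemma tvDist_le_two (μ ν : Measure E) [IsProbabilityMeasure μ] [IsProbabilityMeasure ν] :
    tvDist μ ν ≤ 2 := by
  rw [tvDist]
  have : ⨆ A : {s : Set E // MeasurableSet s}, |(μ A).toReal - (ν A).toReal| ≤ 1 := by
    haveI : Nonempty {s : Set E // MeasurableSet s} := ⟨⟨∅, MeasurableSet.empty⟩⟩
    exact ciSup_le fun A => tv_term_le_one μ ν A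
  linarith

lemma tvDist_triangle (μ ρ ν : Measure E) [IsProbabilityMeasure μ] [IsProbabilityMeasure ρ]
    [IsProbabilityMeasure ν] : tvDist μ ν ≤ tvDist μ ρ + tvDist ρ ν := by
  have h : ∀ A : {s : Set E // MeasurableSet s},
      |(μ A).toReal - (ν A).toReal| ≤ tvDist μ ρ / 2 + tvDist ρ ν / 2 := by
    intro A
    calc |(μ A).toReal - (ν A).toReal|
        ≤ |(μ A).toReal - (ρ A).toReal| + |(ρ A).toReal - (ν A).toReal| :=
          abs_sub_le _ _ _
      _ ≤ tvDist μ ρ / 2 + tvDist ρ ν / 2 :=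
          add_le_add (le_tvDist_half μ ρ A.2) (le_tvDist_half ρ ν A.2)
  haveI : Nonempty {s : Set E // MeasurableSet s} := ⟨⟨∅, MeasurableSet.empty⟩⟩
  have := ciSup_le h
  rw [tvDist]; linarith

lemma integral_sub_le_key (μ ν : Measure E) [IsProbabilityMeasure μ] [IsProbabilityMeasure ν]
    {f : E → ℝ} (hf : Measurable f) {a c D : ℝ} (hc : 0 ≤ c)
    (hfa : ∀ x, a ≤ f x) (hfb : ∀ x, f x ≤ a + c)
    (hD : ∀ {A : Set E}, MeasurableSet A → (μ A).toReal - (ν A).toReal ≤ D) :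
    ∫ x, f x ∂μ - ∫ x, f x ∂ν ≤ c * D := by
  set ξ : Measure E := μ + ν with hξ
  have hμξ : μ ≪ ξ := Measure.absolutelyContinuous_of_le (Measure.le_add_right le_rfl)
  have hνξ : ν ≪ ξ := Measure.absolutelyContinuous_of_le (Measure.le_add_left le_rfl)
  set g : E → ℝ := fun x => (μ.rnDeriv ξ x).toReal with hg
  set h : E → ℝ := fun x => (ν.rnDeriv ξ x).toReal with hh
  have hgm : Measurable g := (Measure.measurable_rnDeriv μ ξ).ennreal_toReal
  have hhm : Measurable h := (Measure.measurable_rnDeriv ν ξ).ennreal_toReal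
  have hgi : Integrable g ξ := Measure.integrable_toReal_rnDeriv
  have hhi : Integrable h ξ := Measure.integrable_toReal_rnDeriv
  have hrepμ : ∫ x, f x ∂μ = ∫ x, g x * f x ∂ξ := by
    rw [← integral_rnDeriv_smul hμξ (f := f)]; simp [hg, smul_eq_mul]
  have hrepν : ∫ x, f x ∂ν = ∫ x, h x * f x ∂ξ := by
    rw [← integral_rnDeriv_smul hνξ (f := f)]; simp [hh, smul_eq_mul]
  have hfbound : ∃ C, ∀ x, ‖f x‖ ≤ C := by
    refine ⟨|a| + c, fun x => ?_⟩
    have := hfa x; have := hfb x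
    rw [Real.norm_eq_abs, abs_le]
    constructor <;> [skip; skip] <;> cases abs_cases a <;> linarith
  have hgfi : Integrable (fun x => f x * g x) ξ :=
    hfbound.elim fun C hC => hgi.bdd_mul hf.aestronglyMeasurable (ae_of_all _ hC)
  have hhfi : Integrable (fun x => f x * h x) ξ :=
    hfbound.elim fun C hC => hhi.bdd_mul hf.aestronglyMeasurable (ae_of_all _ hC)
  have hdiff : ∫ x, f x ∂μ - ∫ x, f x ∂ν = ∫ x, (f x - a) * (g x - h x) ∂ξ := by
    have h0 : ∫ x, g x ∂ξ = 1 := by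
      rw [hg]
      rw [Measure.integral_toReal_rnDeriv hμξ]
      simp
    have h1 : ∫ x, h x ∂ξ = 1 := by
      rw [hh]
      rw [Measure.integral_toReal_rnDeriv hνξ]
      simp
    rw [hrepμ, hrepν]
    have : ∀ x, (f x - a) * (g x - h x) = f x * g x - f x * h x - a * g x + a * h x := by
      intro x; ring
    rw [integral_congr_ae (ae_of_all _ this)]
    have e1 : Integrable (fun x => f x * g x - f x * h x) ξ := hgfi.sub hhfi
    have e2 : Integrable (fun x => f x * g x - f x * h x - a * g x) ξ := e1.sub (hgi.const_mul a)
    rw [integral_add e2 (hhi.const_mul a), integral_sub e1 (hgi.const_mul a),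
        integral_sub hgfi hhfi, integral_const_mul, integral_const_mul, h0, h1]
    have c1 : ∫ x, g x * f x ∂ξ = ∫ x, f x * g x ∂ξ :=
      integral_congr_ae (ae_of_all _ fun x => mul_comm _ _)
    have c2 : ∫ x, h x * f x ∂ξ = ∫ x, f x * h x ∂ξ :=
      integral_congr_ae (ae_of_all _ fun x => mul_comm _ _)
    rw [c1, c2]; ring
  rw [hdiff]
  set S : Set E := {x | h x ≤ g x} with hS
  have hSm : MeasurableSet S := measurableSet_le hhm hgm
  have hinteg : Integrable (fun x => (f x - a) * (g x - h x)) ξ := by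
    have hsub : Integrable (fun x => g x - h x) ξ := hgi.sub hhi
    refine hsub.bdd_mul (hf.sub measurable_const).aestronglyMeasurable (c := c) (ae_of_all _ fun x => ?_)
    have := hfa x; have := hfb x
    rw [Real.norm_eq_abs, abs_le]; constructor <;> linarith
  rw [← integral_add_compl hSm hinteg]
  have hcompl : ∫ x in Sᶜ, (f x - a) * (g x - h x) ∂ξ ≤ 0 := by
    refine setIntegral_nonpos hSm.compl fun x hx => ?_
    have hx' : g x < h x := by simpa [hS] using hx
    have := hfa x
    nlinarith
  have hmain : ∫ x in S, (f x - a) * (g x - h x) ∂ξ ≤ c * D := by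
    have hmono : ∫ x in S, (f x - a) * (g x - h x) ∂ξ ≤ ∫ x in S, c * (g x - h x) ∂ξ := by
      refine setIntegral_mono_on hinteg.integrableOn
        (((hgi.sub hhi).const_mul c).integrableOn) hSm fun x hx => ?_
      have hx' : h x ≤ g x := hx
      have := hfa x; have := hfb x
      nlinarith
    have heq : ∫ x in S, c * (g x - h x) ∂ξ = c * ((μ S).toReal - (ν S).toReal) := by
      rw [integral_const_mul, integral_sub hgi.integrableOn hhi.integrableOn,
        hg, hh, Measure.setIntegral_toReal_rnDeriv hμξ, Measure.setIntegral_toReal_rnDeriv hνξ]; rfl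
    calc _ ≤ ∫ x in S, c * (g x - h x) ∂ξ := hmono
      _ = c * ((μ S).toReal - (ν S).toReal) := heq
      _ ≤ c * D := mul_le_mul_of_nonneg_left (hD hSm) hc
  linarith

lemma nonempty_of_prob (μ : Measure E) [IsProbabilityMeasure μ] : Nonempty E := by
  by_contra h
  rw [not_nonempty_iff] at h
  have : μ Set.univ = 1 := measure_univ
  simp [Set.univ_eq_empty_iff.2 h] at this

lemma isProb_bind (μ : Measure E) [IsProbabilityMeasure μ] (k : Kernel E E) [IsMarkovKernel k] :
    IsProbabilityMeasure (μ.bind k) := by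
  constructor
  rw [Measure.bind_apply MeasurableSet.univ k.measurable.aemeasurable]
  simp

lemma bind_apply_toReal (μ : Measure E) [IsProbabilityMeasure μ] (k : Kernel E E)
    [IsMarkovKernel k] {B : Set E} (hB : MeasurableSet B) :
    ((μ.bind k) B).toReal = ∫ x, ((k x) B).toReal ∂μ := by
  rw [Measure.bind_apply hB k.measurable.aemeasurable]
  rw [integral_toReal (k.measurable_coe hB).aemeasurable
    (ae_of_all _ fun x => measure_lt_top _ _)]

/-- Dobrushin-type contraction: if the kernel has Dobrushin coefficient bounded by `c`,
then binding contracts total variation by `c`. -/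
lemma tvDist_bind_contract (μ ν : Measure E) [IsProbabilityMeasure μ] [IsProbabilityMeasure ν]
    (k : Kernel E E) [IsMarkovKernel k] {c : ℝ} (hc : 0 ≤ c)
    (hk : ∀ x y, tvDist (k x) (k y) ≤ 2 * c) :
    tvDist (μ.bind k) (ν.bind k) ≤ c * tvDist μ ν := by
  haveI : Nonempty E := nonempty_of_prob μ
  haveI := isProb_bind μ k; haveI := isProb_bind ν k
  have key : ∀ A : {s : Set E // MeasurableSet s},
      |((μ.bind k) A).toReal - ((ν.bind k) A).toReal| ≤ c * (tvDist μ ν / 2) := by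
    rintro ⟨B, hB⟩
    set F : E → ℝ := fun x => ((k x) B).toReal with hF
    have hFm : Measurable F := (k.measurable_coe hB).ennreal_toReal
    have hF0 : ∀ x, 0 ≤ F x := fun x => ENNReal.toReal_nonneg
    have hbdd : BddBelow (Set.range F) := ⟨0, by rintro y ⟨x, rfl⟩; exact hF0 x⟩
    set a : ℝ := ⨅ x, F x with ha
    have hfa : ∀ x, a ≤ F x := fun x => ciInf_le hbdd x
    have hosc : ∀ x y, F x - F y ≤ c := by
      intro x y
      have h1 : |F x - F y| ≤ tvDist (k x) (k y) / 2 := le_tvDist_half (k x) (k y) hB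
      have h2 := hk x y
      have := le_abs_self (F x - F y)
      linarith
    have hfb : ∀ x, F x ≤ a + c := by
      intro x
      have : F x - c ≤ a := le_ciInf fun y => by have := hosc x y; linarith
      linarith
    have hD1 : ∀ {A : Set E}, MeasurableSet A → (μ A).toReal - (ν A).toReal ≤ tvDist μ ν / 2 :=
      fun hA => (le_abs_self _).trans (le_tvDist_half μ ν hA)
    have hD2 : ∀ {A : Set E}, MeasurableSet A → (ν A).toReal - (μ A).toReal ≤ tvDist μ ν / 2 := by
      intro A hA
      refine (le_abs_self _).trans ?_
      rw [abs_sub_comm]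
      exact le_tvDist_half μ ν hA
    rw [bind_apply_toReal μ k hB, bind_apply_toReal ν k hB, abs_sub_le_iff]
    constructor
    · exact integral_sub_le_key μ ν hFm hc hfa hfb hD1
    · exact integral_sub_le_key ν μ hFm hc hfa hfb hD2
  haveI : Nonempty {s : Set E // MeasurableSet s} := ⟨⟨∅, MeasurableSet.empty⟩⟩
  have hsup := ciSup_le key
  rw [tvDist]; linarith

/-- Perturbation bound: binding the same measure through two pointwise-close kernels. -/
lemma tvDist_bind_perturb (ν : Measure E) [IsProbabilityMeasure ν]
    (k₁ k₂ : Kernel E E) [IsMarkovKernel k₁] [IsMarkovKernel k₂] {r : ℝ}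
    (hr : ∀ x, tvDist (k₁ x) (k₂ x) ≤ r) :
    tvDist (ν.bind k₁) (ν.bind k₂) ≤ r := by
  haveI : Nonempty E := nonempty_of_prob ν
  haveI := isProb_bind ν k₁; haveI := isProb_bind ν k₂
  have key : ∀ A : {s : Set E // MeasurableSet s},
      |((ν.bind k₁) A).toReal - ((ν.bind k₂) A).toReal| ≤ r / 2 := by
    rintro ⟨B, hB⟩
    set F₁ : E → ℝ := fun x => ((k₁ x) B).toReal with hF₁
    set F₂ : E → ℝ := fun x => ((k₂ x) B).toReal with hF₂
    have hm₁ : Measurable F₁ := (k₁.measurable_coe hB).ennreal_toReal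
    have hm₂ : Measurable F₂ := (k₂.measurable_coe hB).ennreal_toReal
    have hi₁ : Integrable F₁ ν := by
      refine (integrable_const (1:ℝ)).mono' hm₁.aestronglyMeasurable (ae_of_all _ fun x => ?_)
      rw [Real.norm_eq_abs, abs_of_nonneg ENNReal.toReal_nonneg]
      simpa using ENNReal.toReal_mono (by norm_num) (prob_le_one (μ := k₁ x) (s := B))
    have hi₂ : Integrable F₂ ν := by
      refine (integrable_const (1:ℝ)).mono' hm₂.aestronglyMeasurable (ae_of_all _ fun x => ?_)
      rw [Real.norm_eq_abs, abs_of_nonneg ENNReal.toReal_nonneg]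
      simpa using ENNReal.toReal_mono (by norm_num) (prob_le_one (μ := k₂ x) (s := B))
    rw [bind_apply_toReal ν k₁ hB, bind_apply_toReal ν k₂ hB, ← integral_sub hi₁ hi₂]
    calc |∫ x, F₁ x - F₂ x ∂ν| ≤ ∫ x, |F₁ x - F₂ x| ∂ν := by
          simpa [Real.norm_eq_abs] using norm_integral_le_integral_norm (fun x => F₁ x - F₂ x) (μ := ν)
      _ ≤ ∫ _x, r / 2 ∂ν := by
          refine integral_mono (hi₁.sub hi₂).abs (integrable_const _) fun x => ?_
          have h1 : |F₁ x - F₂ x| ≤ tvDist (k₁ x) (k₂ x) / 2 := le_tvDist_half (k₁ x) (k₂ x) hB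
          have := hr x
          linarith
      _ = r / 2 := by simp
  haveI : Nonempty {s : Set E // MeasurableSet s} := ⟨⟨∅, MeasurableSet.empty⟩⟩
  have hsup := ciSup_le key
  rw [tvDist]; linarith

end aux

section chain2
variable {E : Type*} [MeasurableSpace E]

lemma marginal_isProb (P : Measure E → Kernel E E) (hP : ∀ μ, IsMarkovKernel (P μ))
    (μ0 : Measure E) (h : IsProbabilityMeasure μ0) :
    ∀ n, IsProbabilityMeasure (marginal P μ0 n) := by
  intro n
  induction n with
  | zero => exact h
  | succ n ih =>
    haveI := ih; haveI := hP (marginal P μ0 n)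
    exact isProb_bind (marginal P μ0 n) (P (marginal P μ0 n))

end chain2

/-- under (C1), (C2), (C3), for any two initial distributions
`‖μ_n − ν_n‖_TV ≤ ‖μ₀ − ν₀‖_TV (1 − α₂ + λ₂)^{⌊n/2⌋} c_n`. -/
theorem nonlinear_chain_two_initial_distributions_convergence
    {E : Type*} [MeasurableSpace E]
    (P : Measure E → Kernel E E) (hP : ∀ μ, IsMarkovKernel (P μ))
    (α₂ lam₁ lam₂ : ℝ) (hα₂0 : 0 < α₂) (hα₂1 : α₂ < 1)
    (hlam₂0 : 0 ≤ lam₂) (hlam₂α : lam₂ ≤ α₂) (hlam₁0 : 0 ≤ lam₁)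
    (C1 : ∀ (μ ν : Measure E), IsProbabilityMeasure μ → IsProbabilityMeasure ν →
      ∀ x y : E, tvDist (twoStepKernel P μ x) (twoStepKernel P ν y) ≤ 2 * (1 - α₂))
    (C2 : ∀ (μ ν : Measure E), IsProbabilityMeasure μ → IsProbabilityMeasure ν →
      ∀ x : E, tvDist (twoStepKernel P μ x) (twoStepKernel P ν x) ≤ lam₂ * tvDist μ ν)
    (C3 : ∀ (μ ν : Measure E), IsProbabilityMeasure μ → IsProbabilityMeasure ν →
      ∀ x : E, tvDist (P μ x) (P ν x) ≤ lam₁ * tvDist μ ν)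
    (μ0 ν0 : Measure E) (hμ0 : IsProbabilityMeasure μ0) (hν0 : IsProbabilityMeasure ν0) :
    ∀ n : ℕ,
      tvDist (marginal P μ0 n) (marginal P ν0 n) ≤
        tvDist μ0 ν0 * (1 - α₂ + lam₂) ^ (n / 2) *
          (if Odd n then 1 + lam₁ else 1) := by
  haveI := hμ0; haveI := hν0
  -- one step bound
  have step1 : ∀ (μ ν : Measure E), IsProbabilityMeasure μ → IsProbabilityMeasure ν →
      tvDist (stepMeasure P μ) (stepMeasure P ν) ≤ (1 + lam₁) * tvDist μ ν := by
    intro μ ν hμ hν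
    haveI := hμ; haveI := hν; haveI := hP μ; haveI := hP ν
    haveI := isProb_bind μ (P μ); haveI := isProb_bind ν (P μ); haveI := isProb_bind ν (P ν)
    have h1 : tvDist (μ.bind (P μ)) (ν.bind (P μ)) ≤ 1 * tvDist μ ν :=
      tvDist_bind_contract μ ν (P μ) zero_le_one
        (fun x y => by simpa using tvDist_le_two (P μ x) (P μ y))
    have h2 : tvDist (ν.bind (P μ)) (ν.bind (P ν)) ≤ lam₁ * tvDist μ ν :=
      tvDist_bind_perturb ν (P μ) (P ν) (fun x => C3 μ ν hμ hν x)
    have htri := tvDist_triangle (μ.bind (P μ)) (ν.bind (P μ)) (ν.bind (P ν))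
    show tvDist (μ.bind (P μ)) (ν.bind (P ν)) ≤ (1 + lam₁) * tvDist μ ν
    nlinarith [tvDist_nonneg μ ν]
  -- two step bound
  have step2 : ∀ (μ ν : Measure E), IsProbabilityMeasure μ → IsProbabilityMeasure ν →
      tvDist (stepMeasure P (stepMeasure P μ)) (stepMeasure P (stepMeasure P ν)) ≤
        (1 - α₂ + lam₂) * tvDist μ ν := by
    intro μ ν hμ hν
    haveI := hμ; haveI := hν
    haveI := hP μ; haveI := hP ν
    haveI := hP (stepMeasure P μ); haveI := hP (stepMeasure P ν)
    set Qμ : Kernel E E := (P (stepMeasure P μ)) ∘ₖ (P μ) with hQμ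
    set Qν : Kernel E E := (P (stepMeasure P ν)) ∘ₖ (P ν) with hQν
    have hQμapp : ∀ x, Qμ x = twoStepKernel P μ x := fun x => Kernel.comp_apply _ _ x
    have hQνapp : ∀ x, Qν x = twoStepKernel P ν x := fun x => Kernel.comp_apply _ _ x
    have hbindμ : stepMeasure P (stepMeasure P μ) = μ.bind Qμ := by
      show (μ.bind fun x => P μ x).bind (fun x => P (stepMeasure P μ) x) = _
      rw [Measure.bind_bind (P μ).measurable.aemeasurable (P (stepMeasure P μ)).measurable.aemeasurable]
      refine congrArg (Measure.bind μ) ?_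
      funext x
      rw [hQμapp x]
      rfl
    have hbindν : stepMeasure P (stepMeasure P ν) = ν.bind Qν := by
      show (ν.bind fun x => P ν x).bind (fun x => P (stepMeasure P ν) x) = _
      rw [Measure.bind_bind (P ν).measurable.aemeasurable (P (stepMeasure P ν)).measurable.aemeasurable]
      refine congrArg (Measure.bind ν) ?_
      funext x
      rw [hQνapp x]
      rfl
    haveI := isProb_bind μ Qμ; haveI := isProb_bind ν Qμ; haveI := isProb_bind ν Qν
    have h1 : tvDist (μ.bind Qμ) (ν.bind Qμ) ≤ (1 - α₂) * tvDist μ ν := by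
      refine tvDist_bind_contract μ ν Qμ (by linarith) fun x y => ?_
      rw [hQμapp x, hQμapp y]
      exact C1 μ μ hμ hμ x y
    have h2 : tvDist (ν.bind Qμ) (ν.bind Qν) ≤ lam₂ * tvDist μ ν := by
      refine tvDist_bind_perturb ν Qμ Qν fun x => ?_
      rw [hQμapp x, hQνapp x]
      exact C2 μ ν hμ hν x
    have htri := tvDist_triangle (μ.bind Qμ) (ν.bind Qμ) (ν.bind Qν)
    rw [hbindμ, hbindν]
    nlinarith [tvDist_nonneg μ ν]
  have hβ : (0:ℝ) ≤ 1 - α₂ + lam₂ := by linarith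
  have hprobμ := marginal_isProb P hP μ0 hμ0
  have hprobν := marginal_isProb P hP ν0 hν0
  -- two-step induction
  have key : ∀ m : ℕ,
      (tvDist (marginal P μ0 m) (marginal P ν0 m) ≤
        tvDist μ0 ν0 * (1 - α₂ + lam₂) ^ (m / 2) * (if Odd m then 1 + lam₁ else 1)) ∧
      (tvDist (marginal P μ0 (m+1)) (marginal P ν0 (m+1)) ≤
        tvDist μ0 ν0 * (1 - α₂ + lam₂) ^ ((m+1) / 2) * (if Odd (m+1) then 1 + lam₁ else 1)) := by
    intro m
    induction m with
    | zero =>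
      constructor
      · show tvDist μ0 ν0 ≤ tvDist μ0 ν0 * (1 - α₂ + lam₂) ^ (0 / 2) * (if Odd 0 then 1 + lam₁ else 1)
        norm_num [Nat.odd_iff]
      · show tvDist (stepMeasure P μ0) (stepMeasure P ν0) ≤
          tvDist μ0 ν0 * (1 - α₂ + lam₂) ^ (1 / 2) * (if Odd 1 then 1 + lam₁ else 1)
        have := step1 μ0 ν0 hμ0 hν0
        norm_num [Nat.odd_iff]
        linarith
    | succ m ihm =>
      refine ⟨ihm.2, ?_⟩
      have hdiv : (m + 2) / 2 = m / 2 + 1 := by omega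
      have hodd : Odd (m + 2) ↔ Odd m := by rw [Nat.odd_iff, Nat.odd_iff]; omega
      have h := step2 (marginal P μ0 m) (marginal P ν0 m) (hprobμ m) (hprobν m)
      have hle := ihm.1
      have hcnonneg : (0:ℝ) ≤ (if Odd m then 1 + lam₁ else 1) := by
        split <;> linarith
      haveI := hprobμ m; haveI := hprobν m
      have htv0 := tvDist_nonneg (marginal P μ0 m) (marginal P ν0 m)
      show tvDist (stepMeasure P (stepMeasure P (marginal P μ0 m)))
          (stepMeasure P (stepMeasure P (marginal P ν0 m))) ≤
          tvDist μ0 ν0 * (1 - α₂ + lam₂) ^ ((m + 1 + 1) / 2) *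
            (if Odd (m + 1 + 1) then 1 + lam₁ else 1)
      have hfin : (m + 1 + 1) = m + 2 := rfl
      rw [hfin, hdiv, if_congr hodd rfl rfl]
      calc tvDist (stepMeasure P (stepMeasure P (marginal P μ0 m)))
            (stepMeasure P (stepMeasure P (marginal P ν0 m)))
          ≤ (1 - α₂ + lam₂) * tvDist (marginal P μ0 m) (marginal P ν0 m) := h
        _ ≤ (1 - α₂ + lam₂) *
            (tvDist μ0 ν0 * (1 - α₂ + lam₂) ^ (m / 2) * (if Odd m then 1 + lam₁ else 1)) :=
            mul_le_mul_of_nonneg_left hle hβ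
        _ = tvDist μ0 ν0 * (1 - α₂ + lam₂) ^ (m / 2 + 1) * (if Odd m then 1 + lam₁ else 1) := by
            ring
  intro n
  exact (key n).1
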